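/- Suppose Y is square-integrable and η₁ : ℝ^p → ℝ is a measurable function with η₁(X) square-integrable such that E[D·Y | σ(X)] = δ·η₁(X) almost surely and E[1{D=1} | σ(X)] = δ almost surely. Let θ₁ = E[D·Y]/δ. Then E[ (D/δ)·(Y − θ₁)·(η₁(X) − θ₁) ] = E[ (η₁(X) − θ₁)² ]. -/

import Mathlib

open MeasureTheory

/-- **Key cross-moment identity in the proof of asymptotic normality.**
If `E[D·Y | σ(X)] = δ·η₁(X)` a.s. and `E[1{D=1} | σ(X)] = δ` a.s., then with
`θ₁ = E[D·Y]/δ` one has `E[(D/δ)(Y − θ₁)(η₁(X) − θ₁)] = E[(η₁(X) − θ₁)²]`. -/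
theorem efficient_score_cross_moment_identity
    {Ω : Type*} [MeasurableSpace Ω] (μ : Measure Ω) [IsProbabilityMeasure μ]
    {p : ℕ}
    (D : Ω → ℝ) (X : Ω → EuclideanSpace ℝ (Fin p)) (Y : Ω → ℝ)
    (hDm : Measurable D) (hXm : Measurable X) (hYm : Measurable Y)
    (hD01 : ∀ ω, D ω = 0 ∨ D ω = 1)
    (δ : ℝ) (hδ : δ = (μ {ω | D ω = 1}).toReal)
    (hδ0 : 0 < δ) (hδ1 : δ < 1)
    (hY2 : MemLp Y 2 μ)
    (η1 : EuclideanSpace ℝ (Fin p) → ℝ) (hη1m : Measurable η1)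
    (hη12 : MemLp (fun ω => η1 (X ω)) 2 μ)
    (hcond1 : (μ[fun ω => D ω * Y ω | MeasurableSpace.comap X inferInstance])
        =ᵐ[μ] fun ω => δ * η1 (X ω))
    (hcondD : (μ[D | MeasurableSpace.comap X inferInstance]) =ᵐ[μ] fun _ => δ)
    (θ1 : ℝ) (hθ1 : θ1 = (∫ ω, D ω * Y ω ∂μ) / δ) :
    ∫ ω, D ω / δ * (Y ω - θ1) * (η1 (X ω) - θ1) ∂μ
      = ∫ ω, (η1 (X ω) - θ1) ^ 2 ∂μ := by
  have hmle : MeasurableSpace.comap X inferInstance ≤ ‹MeasurableSpace Ω› := hXm.comap_le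
  set m := MeasurableSpace.comap X inferInstance with hmdef
  have hXmm : Measurable[m] X := Measurable.of_comap_le le_rfl
  set g : Ω → ℝ := fun ω => η1 (X ω) - θ1 with hgdef
  have hgm : StronglyMeasurable[m] g :=
    ((hη1m.comp hXmm).sub measurable_const).stronglyMeasurable
  have hg2 : MemLp g 2 μ := hη12.sub (memLp_const θ1)
  have h211 : (1 : ENNReal) / 1 = 1 / 2 + 1 / 2 := by
    rw [ENNReal.div_add_div_same, one_div_one,
      show (1 : ENNReal) + 1 = 2 from one_add_one_eq_two,
      ENNReal.div_self two_ne_zero ENNReal.ofNat_ne_top]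
  have hmul : ∀ f : Ω → ℝ, MemLp f 2 μ → Integrable (g * f) μ := by
    intro f hf
    have := hf.smul (r := 1) hg2
    rw [memLp_one_iff_integrable] at this
    exact this
  have hDtop : MemLp D ⊤ μ := by
    refine memLp_top_of_bound hDm.aestronglyMeasurable 1 (ae_of_all _ fun ω => ?_)
    rcases hD01 ω with h | h <;> simp [h]
  have hDY2 : MemLp (fun ω => D ω * Y ω) 2 μ := hY2.mul' hDtop
  have hD2 : MemLp D 2 μ := hDtop.mono_exponent le_top
  have key : ∀ f : Ω → ℝ, MemLp f 2 μ →
      ∫ ω, g ω * f ω ∂μ = ∫ ω, g ω * (μ[f|m]) ω ∂μ := by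
    intro f hf
    have hfi : Integrable f μ := hf.integrable one_le_two
    have hgf : Integrable (g * f) μ := hmul f hf
    have h1 : μ[g * f|m] =ᵐ[μ] g * μ[f|m] := condExp_mul_of_stronglyMeasurable_left hgm hgf hfi
    calc ∫ ω, g ω * f ω ∂μ = ∫ ω, (μ[g * f|m]) ω ∂μ := (integral_condExp hmle).symm
      _ = ∫ ω, g ω * (μ[f|m]) ω ∂μ := integral_congr_ae h1
  have h1 : ∫ ω, g ω * (D ω * Y ω) ∂μ = δ * ∫ ω, g ω * η1 (X ω) ∂μ := by
    rw [key _ hDY2, ← integral_const_mul]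
    refine integral_congr_ae ?_
    filter_upwards [hcond1] with ω hω
    rw [hω]; ring
  have h2 : ∫ ω, g ω * D ω ∂μ = δ * ∫ ω, g ω ∂μ := by
    rw [key _ hD2, ← integral_const_mul]
    refine integral_congr_ae ?_
    filter_upwards [hcondD] with ω hω
    rw [hω]; ring
  have hgi : Integrable g μ := hg2.integrable one_le_two
  have hgη : Integrable (fun ω => g ω * η1 (X ω)) μ := hmul _ hη12
  have hδne : δ ≠ 0 := ne_of_gt hδ0
  calc ∫ ω, D ω / δ * (Y ω - θ1) * (η1 (X ω) - θ1) ∂μ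
      = ∫ ω, (1 / δ) * (g ω * (D ω * Y ω)) - (θ1 / δ) * (g ω * D ω) ∂μ := by
        refine integral_congr_ae (ae_of_all _ fun ω => ?_)
        simp only [hgdef]
        field_simp
    _ = (1 / δ) * ∫ ω, g ω * (D ω * Y ω) ∂μ - (θ1 / δ) * ∫ ω, g ω * D ω ∂μ := by
        have hA : Integrable (fun ω => 1 / δ * (g ω * (D ω * Y ω))) μ :=
          (hmul _ hDY2).const_mul _
        have hB : Integrable (fun ω => θ1 / δ * (g ω * D ω)) μ :=
          (hmul _ hD2).const_mul _
        rw [integral_sub hA hB, integral_const_mul, integral_const_mul]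
    _ = ∫ ω, g ω * η1 (X ω) ∂μ - θ1 * ∫ ω, g ω ∂μ := by
        rw [h1, h2]; field_simp
    _ = ∫ ω, g ω * η1 (X ω) - θ1 * g ω ∂μ := by
        rw [integral_sub hgη (hgi.const_mul _), integral_const_mul]
    _ = ∫ ω, (η1 (X ω) - θ1) ^ 2 ∂μ := by
        refine integral_congr_ae (ae_of_all _ fun ω => ?_)
        simp only [hgdef]; ring
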